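/- Let n ≥ 1 and 1 ≤ m ≤ n be integers, let I ⊆ {1, …, n} with |I| = m, and let u ∈ ℝⁿ satisfy u_i ≥ 0 for all i and ∑_{i=1}^n u_i = 1. Suppose ∑_{i∈I} u_i < m/n. Define v ∈ ℝⁿ by v_i = 1/m for i ∈ I and v_i = 0 otherwise. Then there exists λ ∈ (0, 1] such that ‖(1−λ)·u + λ·v‖₂ < ‖u‖₂. -/

import Mathlib

open RealInnerProductSpace in

theorem stmt_15 (n m : ℕ) (hn : 1 ≤ n) (hm1 : 1 ≤ m) (hmn : m ≤ n)
    (I : Finset (Fin n)) (hIcard : I.card = m)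
    (u : EuclideanSpace ℝ (Fin n)) (hu0 : ∀ i, 0 ≤ u i) (hu1 : ∑ i, u i = 1)
    (hlt : ∑ i ∈ I, u i < (m : ℝ) / n)
    (v : EuclideanSpace ℝ (Fin n)) (hv : ∀ i, v i = if i ∈ I then 1 / (m : ℝ) else 0) :
    ∃ lam : ℝ, 0 < lam ∧ lam ≤ 1 ∧ ‖(1 - lam) • u + lam • v‖ < ‖u‖ := by
  have hn0 : (0 : ℝ) < n := by exact_mod_cast hn
  have hm0 : (0 : ℝ) < m := by exact_mod_cast hm1
  set c : ℝ := (inner ℝ u (v - u) : ℝ) with hc_def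
  set d : ℝ := ‖v - u‖ ^ 2 with hd_def
  have hd0 : 0 ≤ d := by positivity
  -- inner product ⟪u, v⟫
  have huv : ⟪u, v⟫ = (∑ i ∈ I, u i) / m := by
    rw [PiLp.inner_apply]
    simp only [RCLike.inner_apply, starRingEnd_apply, star_trivial, hv]
    simp only [mul_ite, mul_zero, ite_mul, zero_mul]
    rw [Finset.sum_ite_mem, Finset.univ_inter, Finset.sum_div]
    exact Finset.sum_congr rfl fun i _ => by ring
  have h1 : ⟪u, v⟫ < 1 / n := by
    rw [huv]
    rw [div_lt_div_iff₀ hm0 hn0]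
    calc (∑ i ∈ I, u i) * n < ((m : ℝ) / n) * n := by
          exact mul_lt_mul_of_pos_right hlt hn0
      _ = m := by field_simp
      _ = 1 * m := by ring
  have h2 : 1 / (n : ℝ) ≤ ‖u‖ ^ 2 := by
    have hcs := sq_sum_le_card_mul_sum_sq (s := (Finset.univ : Finset (Fin n))) (f := fun i => u i)
    rw [hu1] at hcs
    simp only [Finset.card_univ, Fintype.card_fin] at hcs
    have hnorm : ‖u‖ ^ 2 = ∑ i, u i ^ 2 := by
      rw [EuclideanSpace.norm_eq, Real.sq_sqrt (by positivity)]
      congr 1; ext i; rw [Real.norm_eq_abs, sq_abs]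
    rw [hnorm, div_le_iff₀ hn0]
    linarith [hcs]
  have hc : c < 0 := by
    have : c = ⟪u, v⟫ - ‖u‖ ^ 2 := by
      rw [hc_def, inner_sub_right, real_inner_self_eq_norm_sq]
    rw [this]
    linarith
  -- choose lambda
  set lam : ℝ := min 1 (-c / (d + 1)) with hlam_def
  have hlam_pos : 0 < lam := by
    apply lt_min one_pos
    apply div_pos (by linarith) (by linarith)
  have hlam_le1 : lam ≤ 1 := min_le_left _ _
  have hlam_le : lam * (d + 1) ≤ -c := by
    have : lam ≤ -c / (d + 1) := min_le_right _ _
    rw [le_div_iff₀ (by linarith)] at this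
    linarith
  refine ⟨lam, hlam_pos, hlam_le1, ?_⟩
  have heq : (1 - lam) • u + lam • v = u + lam • (v - u) := by
    rw [sub_smul, smul_sub, one_smul]
    abel
  rw [heq]
  have hexp : ‖u + lam • (v - u)‖ ^ 2 = ‖u‖ ^ 2 + 2 * (lam * c) + lam ^ 2 * d := by
    rw [norm_add_sq_real, real_inner_smul_right, norm_smul, mul_pow, Real.norm_eq_abs,
      sq_abs, hd_def]
  have hlt2 : ‖u + lam • (v - u)‖ ^ 2 < ‖u‖ ^ 2 := by
    rw [hexp]
    nlinarith [mul_le_mul_of_nonneg_left hlam_le (le_of_lt hlam_pos),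
      mul_pos hlam_pos (neg_pos.mpr hc)]
  exact lt_of_pow_lt_pow_left₀ 2 (norm_nonneg _) hlt2
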